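/- The probability that a completed coupon collection sequence over d kinds ends with exactly j singletons is F(j) = j C(d,j) ∫_0^∞ x^{j-1} (e^x - 1 - x)^{d-j} e^{-x d} dx, for j = 1, 2, ..., d. -/

import Mathlib

open MeasureTheory

/-- `Sge h n k` is the number of partitions of an `n`-set into exactly `k` blocks,
each block of size at least `h`. -/
noncomputable def Sge (h n k : ℕ) : ℕ :=
  Nat.card {P : Finpartition (Finset.univ : Finset (Fin n)) //
    P.parts.card = k ∧ ∀ p ∈ P.parts, h ≤ p.card}

/-- `f n j d = (d!/d^n) C(n-1,j-1) S_{≥2}(n-j, d-j)`: the probability of completing the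
collection at step `n` with exactly `j` singletons. -/
noncomputable def f (n j d : ℕ) : ℝ :=
  (Nat.factorial d : ℝ) / (d : ℝ) ^ n * (Nat.choose (n - 1) (j - 1) : ℝ) *
    (Sge 2 (n - j) (d - j) : ℝ)

set_option linter.unusedSectionVars false

namespace CouponAux

open Finset

variable {α : Type} [Fintype α] {k m : ℕ}

def fib (g : α → Fin k) (y : Fin k) : Finset α :=
  Finset.univ.filter fun x => g x = y

lemma mem_fib {g : α → Fin k} {y : Fin k} {x : α} : x ∈ fib g y ↔ g x = y := by
  simp [fib]

def Cond (g : α → Fin k) : Prop := ∀ y, 2 ≤ (fib g y).card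

noncomputable def NgT (α : Type) [Fintype α] (k : ℕ) : ℕ :=
  Nat.card {g : α → Fin k // Cond g}

noncomputable def Ng (m k : ℕ) : ℕ := NgT (Fin m) k

section DecEq
variable [DecidableEq α]

lemma fib_nonempty {g : α → Fin k} (hg : Cond g) (y : Fin k) : (fib g y).Nonempty :=
  Finset.card_pos.mp (lt_of_lt_of_le two_pos (hg y))

lemma fib_injective {g : α → Fin k} (hg : Cond g) : Function.Injective (fib g) := by
  intro y y' h
  obtain ⟨x, hx⟩ := fib_nonempty hg y
  have h1 : g x = y := mem_fib.mp hx
  have h2 : g x = y' := mem_fib.mp (h ▸ hx)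
  rw [← h1, h2]

def partn (g : α → Fin k) (hg : Cond g) : Finpartition (Finset.univ : Finset α) where
  parts := Finset.univ.image (fib g)
  supIndep := by
    rw [Finset.supIndep_iff_pairwiseDisjoint]
    intro p hp q hq hpq
    simp only [Finset.coe_image, Set.mem_image, Finset.coe_univ, Set.image_univ,
      Set.mem_range] at hp hq
    obtain ⟨y, rfl⟩ := hp
    obtain ⟨y', rfl⟩ := hq
    have hyy : y ≠ y' := fun h => hpq (by rw [h])
    simp only [Function.onFun, id]
    rw [Finset.disjoint_left]
    intro a ha ha'
    exact hyy (by rw [← mem_fib.mp ha, mem_fib.mp ha'])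
  sup_parts := by
    apply Finset.Subset.antisymm
    · intro x _
      exact Finset.mem_univ x
    · intro x _
      rw [Finset.mem_sup]
      exact ⟨fib g (g x), Finset.mem_image_of_mem _ (Finset.mem_univ _), mem_fib.mpr rfl⟩
  bot_notMem := by
    simp only [Finset.bot_eq_empty, Finset.mem_image]
    rintro ⟨y, -, hy⟩
    have h2 := hg y
    rw [hy] at h2
    simp at h2

lemma partn_parts {g : α → Fin k} (hg : Cond g) :
    (partn g hg).parts = Finset.univ.image (fib g) := rfl

lemma partn_parts_card {g : α → Fin k} (hg : Cond g) :
    (partn g hg).parts.card = k := by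
  rw [partn_parts, Finset.card_image_of_injective _ (fib_injective hg), Finset.card_univ,
    Fintype.card_fin]

lemma partn_parts_size {g : α → Fin k} (hg : Cond g) :
    ∀ p ∈ (partn g hg).parts, 2 ≤ p.card := by
  intro p hp
  rw [partn_parts, Finset.mem_image] at hp
  obtain ⟨y, -, rfl⟩ := hp
  exact hg y

def gOf (P : Finpartition (Finset.univ : Finset α)) (e : {p // p ∈ P.parts} ≃ Fin k)
    (x : α) : Fin k :=
  e ⟨P.part x, P.part_mem.mpr (Finset.mem_univ x)⟩

lemma fib_gOf (P : Finpartition (Finset.univ : Finset α)) (e : {p // p ∈ P.parts} ≃ Fin k)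
    (y : Fin k) : fib (gOf P e) y = ((e.symm y : {p // p ∈ P.parts}) : Finset α) := by
  ext x
  rw [mem_fib]
  constructor
  · intro h
    have hx : (⟨P.part x, P.part_mem.mpr (Finset.mem_univ x)⟩ : {p // p ∈ P.parts}) = e.symm y := by
      rw [← h]
      exact (Equiv.symm_apply_apply e _).symm
    have hmem : x ∈ P.part x := P.mem_part (Finset.mem_univ x)
    have := congrArg Subtype.val hx
    simp only at this
    rw [← this]
    exact hmem
  · intro hx
    have hpart : P.part x = ((e.symm y : {p // p ∈ P.parts}) : Finset α) :=
      P.part_eq_of_mem (e.symm y).2 hx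
    unfold gOf
    rw [show (⟨P.part x, P.part_mem.mpr (Finset.mem_univ x)⟩ : {p // p ∈ P.parts}) = e.symm y from
      Subtype.ext hpart, Equiv.apply_symm_apply]

lemma cond_gOf (P : Finpartition (Finset.univ : Finset α)) (h2 : ∀ p ∈ P.parts, 2 ≤ p.card)
    (e : {p // p ∈ P.parts} ≃ Fin k) : Cond (gOf P e) := by
  intro y
  rw [fib_gOf]
  exact h2 _ (e.symm y).2

lemma partn_gOf (P : Finpartition (Finset.univ : Finset α)) (h2 : ∀ p ∈ P.parts, 2 ≤ p.card)
    (e : {p // p ∈ P.parts} ≃ Fin k) : partn (gOf P e) (cond_gOf P h2 e) = P := by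
  apply Finpartition.ext
  rw [partn_parts]
  ext p
  rw [Finset.mem_image]
  constructor
  · rintro ⟨y, -, rfl⟩
    rw [fib_gOf]
    exact (e.symm y).2
  · intro hp
    exact ⟨e ⟨p, hp⟩, Finset.mem_univ _, by rw [fib_gOf, Equiv.symm_apply_apply]⟩

theorem NgT_eq_fact_mul (m k : ℕ) : Ng m k = k.factorial * Sge 2 m k := by
  classical
  let T := {g : Fin m → Fin k // Cond g}
  let Pt := {P : Finpartition (Finset.univ : Finset (Fin m)) //
    P.parts.card = k ∧ ∀ p ∈ P.parts, 2 ≤ p.card}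
  let Φ : T → Pt := fun g => ⟨partn g.1 g.2, partn_parts_card g.2, partn_parts_size g.2⟩
  have key : ∀ P : Pt, Nat.card {g : T // Φ g = P} = k.factorial := by
    intro P
    have hcard : Fintype.card {p // p ∈ P.1.parts} = k := by
      rw [Fintype.card_coe, P.2.1]
    let B : ({p // p ∈ P.1.parts} ≃ Fin k) → {g : T // Φ g = P} := fun e =>
      ⟨⟨gOf P.1 e, cond_gOf P.1 P.2.2 e⟩, Subtype.ext (partn_gOf P.1 P.2.2 e)⟩
    have hBinj : Function.Injective B := by
      intro e e' h
      have hg : gOf P.1 e = gOf P.1 e' := congrArg (fun z => (Subtype.val (Subtype.val z)))  h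
      ext p
      obtain ⟨x, hx⟩ := P.1.nonempty_of_mem_parts p.2
      have hpart : P.1.part x = p.1 := P.1.part_eq_of_mem p.2 hx
      have h1 : gOf P.1 e x = gOf P.1 e' x := congrFun hg x
      unfold gOf at h1
      rw [show (⟨P.1.part x, P.1.part_mem.mpr (Finset.mem_univ x)⟩ : {p // p ∈ P.1.parts}) = p from
        Subtype.ext hpart] at h1
      exact congrArg Fin.val h1
    have hBsurj : Function.Surjective B := by
      rintro ⟨⟨g, hg⟩, hΦ⟩
      have hparts : Finset.univ.image (fib g) = P.1.parts := by
        have := congrArg (fun z => (Subtype.val z).parts) hΦ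
        simpa [Φ, partn_parts] using this
      let F : Fin k → {p // p ∈ P.1.parts} := fun y =>
        ⟨fib g y, hparts ▸ Finset.mem_image_of_mem _ (Finset.mem_univ y)⟩
      have hF : Function.Bijective F := by
        constructor
        · intro y y' h
          exact fib_injective hg (congrArg Subtype.val h)
        · rintro ⟨p, hp⟩
          rw [← hparts] at hp
          obtain ⟨y, -, hy⟩ := Finset.mem_image.mp hp
          exact ⟨y, Subtype.ext hy⟩
      refine ⟨(Equiv.ofBijective F hF).symm, ?_⟩
      apply Subtype.ext
      apply Subtype.ext
      show gOf P.1 (Equiv.ofBijective F hF).symm = g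
      funext x
      have hmem : x ∈ fib g (g x) := mem_fib.mpr rfl
      have hfibmem : fib g (g x) ∈ P.1.parts :=
        hparts ▸ Finset.mem_image_of_mem _ (Finset.mem_univ (g x))
      have hpart : P.1.part x = fib g (g x) := P.1.part_eq_of_mem hfibmem hmem
      unfold gOf
      rw [show (⟨P.1.part x, P.1.part_mem.mpr (Finset.mem_univ x)⟩ : {p // p ∈ P.1.parts}) =
        F (g x) from Subtype.ext hpart]
      exact (Equiv.ofBijective F hF).symm_apply_apply (g x)
    have : Nat.card {g : T // Φ g = P} = Nat.card ({p // p ∈ P.1.parts} ≃ Fin k) :=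
      (Nat.card_congr (Equiv.ofBijective B ⟨hBinj, hBsurj⟩)).symm
    rw [this, Nat.card_eq_fintype_card, Fintype.card_equiv (Fintype.equivFinOfCardEq hcard),
      hcard]
  calc Ng m k = Nat.card T := rfl
    _ = Nat.card (Σ P : Pt, {g : T // Φ g = P}) :=
        Nat.card_congr (Equiv.sigmaFiberEquiv Φ).symm
    _ = ∑ P : Pt, Nat.card {g : T // Φ g = P} := by
        rw [Nat.card_eq_fintype_card, Fintype.card_sigma]
        exact Finset.sum_congr rfl fun P _ => (Nat.card_eq_fintype_card).symm
    _ = ∑ _P : Pt, k.factorial := Finset.sum_congr rfl fun P _ => key P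
    _ = k.factorial * Sge 2 m k := by
        rw [Finset.sum_const, Finset.card_univ, smul_eq_mul, Sge, Nat.card_eq_fintype_card,
          Nat.mul_comm]


theorem Ng_eq_fact (m k : ℕ) : Ng m k = k.factorial * Sge 2 m k :=
  NgT_eq_fact_mul m k

end DecEq

lemma NgT_congr {β : Type} [Fintype β] (e : α ≃ β) (k : ℕ) : NgT α k = NgT β k := by
  apply Nat.card_congr
  refine Equiv.subtypeEquiv (Equiv.arrowCongr e (Equiv.refl (Fin k))) ?_
  intro g
  have hfib : ∀ y, fib ((Equiv.arrowCongr e (Equiv.refl (Fin k))) g) y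
      = (fib g y).map e.toEmbedding := by
    intro y
    ext b
    simp only [fib, Finset.mem_filter, Finset.mem_univ, true_and, Finset.mem_map,
      Equiv.coe_toEmbedding, Equiv.arrowCongr_apply, Function.comp, Equiv.refl_apply]
    constructor
    · intro h
      exact ⟨e.symm b, h, by simp⟩
    · rintro ⟨a, ha, rfl⟩
      simpa using ha
  unfold Cond
  apply forall_congr'
  intro y
  rw [hfib y, Finset.card_map]

section Rec
variable {S : Finset (Fin m)}

def toCompl {g : Fin m → Fin (k+1)} (hfib : fib g (Fin.last k) = S) (x : {x // x ∈ Sᶜ}) :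
    Fin k :=
  (g x.1).castPred (by
    intro h
    have hmem : x.1 ∈ fib g (Fin.last k) := mem_fib.mpr h
    rw [hfib] at hmem
    exact Finset.mem_compl.mp x.2 hmem)

lemma fib_toCompl {g : Fin m → Fin (k+1)} (hfib : fib g (Fin.last k) = S) (y : Fin k) :
    fib g (Fin.castSucc y) = (fib (toCompl hfib) y).map (Function.Embedding.subtype _) := by
  ext a
  simp only [mem_fib, Finset.mem_map, Function.Embedding.coe_subtype]
  constructor
  · intro h
    have hne : g a ≠ Fin.last k := by rw [h]; exact (Fin.castSucc_lt_last y).ne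
    have ha : a ∈ Sᶜ := by
      rw [Finset.mem_compl, ← hfib, mem_fib]
      exact hne
    refine ⟨⟨a, ha⟩, ?_, rfl⟩
    refine Fin.castSucc_injective _ ?_
    simp only [toCompl]
    rw [Fin.castSucc_castPred]
    exact h
  · rintro ⟨x, hx, rfl⟩
    have h2 := congrArg Fin.castSucc hx
    simp only [toCompl] at h2
    rw [Fin.castSucc_castPred] at h2
    exact h2

lemma cond_toCompl {g : Fin m → Fin (k+1)} (hg : Cond g) (hfib : fib g (Fin.last k) = S) :
    Cond (toCompl hfib) := by
  intro y
  have h := hg (Fin.castSucc y)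
  rw [fib_toCompl hfib y, Finset.card_map] at h
  exact h

def fromCompl (S : Finset (Fin m)) (h : {x // x ∈ Sᶜ} → Fin k) (x : Fin m) : Fin (k+1) :=
  if hx : x ∈ S then Fin.last k else Fin.castSucc (h ⟨x, Finset.mem_compl.mpr hx⟩)

lemma fib_fromCompl_last (S : Finset (Fin m)) (h : {x // x ∈ Sᶜ} → Fin k) :
    fib (fromCompl S h) (Fin.last k) = S := by
  ext x
  rw [mem_fib, fromCompl]
  by_cases hx : x ∈ S
  · simp [hx]
  · simp [hx, (Fin.castSucc_lt_last _).ne]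

lemma fib_fromCompl_castSucc (S : Finset (Fin m)) (h : {x // x ∈ Sᶜ} → Fin k) (y : Fin k) :
    fib (fromCompl S h) (Fin.castSucc y) = (fib h y).map (Function.Embedding.subtype _) := by
  ext a
  simp only [mem_fib, Finset.mem_map, Function.Embedding.coe_subtype, fromCompl]
  by_cases ha : a ∈ S
  · simp only [ha, dif_pos]
    constructor
    · intro hcontr
      exact absurd hcontr.symm (Fin.castSucc_lt_last y).ne
    · rintro ⟨x, -, rfl⟩
      have := x.2
      rw [Finset.mem_compl] at this
      exact absurd ha this
  · simp only [ha, dif_neg, not_false_iff, Fin.castSucc_inj]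
    constructor
    · intro hy
      exact ⟨⟨a, Finset.mem_compl.mpr ha⟩, hy, rfl⟩
    · rintro ⟨x, hx, rfl⟩
      rw [← hx]

lemma cond_fromCompl (S : Finset (Fin m)) (hS : 2 ≤ S.card) {h : {x // x ∈ Sᶜ} → Fin k}
    (hh : Cond h) : Cond (fromCompl S h) := by
  intro y
  induction y using Fin.lastCases with
  | last => rw [fib_fromCompl_last]; exact hS
  | cast y => rw [fib_fromCompl_castSucc, Finset.card_map]; exact hh y

theorem Ng_succ (m k : ℕ) :
    Ng m (k + 1)
      = ∑ l ∈ Finset.range (m + 1), if 2 ≤ l then m.choose l * Ng (m - l) k else 0 := by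
  classical
  let T := {g : Fin m → Fin (k+1) // Cond g}
  let Φ : T → Finset (Fin m) := fun g => fib g.1 (Fin.last k)
  have key : ∀ S : Finset (Fin m), Nat.card {g : T // Φ g = S} =
      if 2 ≤ S.card then Ng (m - S.card) k else 0 := by
    intro S
    by_cases hS : 2 ≤ S.card
    · rw [if_pos hS]
      have E : {g : T // Φ g = S} ≃ {h : {x // x ∈ Sᶜ} → Fin k // Cond h} :=
        { toFun := fun g => ⟨toCompl g.2, cond_toCompl g.1.2 g.2⟩
          invFun := fun h => ⟨⟨fromCompl S h.1, cond_fromCompl S hS h.2⟩,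
            fib_fromCompl_last S h.1⟩
          left_inv := by
            rintro ⟨⟨g, hg⟩, hfg⟩
            apply Subtype.ext
            apply Subtype.ext
            funext x
            show fromCompl S (toCompl hfg) x = g x
            rw [fromCompl]
            by_cases hx : x ∈ S
            · rw [dif_pos hx]
              have hfg' : fib g (Fin.last k) = S := hfg
              have : x ∈ fib g (Fin.last k) := by rw [hfg']; exact hx
              exact (mem_fib.mp this).symm
            · rw [dif_neg hx]
              exact Fin.castSucc_castPred _ _
          right_inv := by
            rintro ⟨h, hh⟩
            apply Subtype.ext
            funext x
            show toCompl (fib_fromCompl_last S h) x = h x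
            have hx : x.1 ∉ S := Finset.mem_compl.mp x.2
            have : fromCompl S h x.1 = Fin.castSucc (h ⟨x.1, Finset.mem_compl.mpr hx⟩) :=
              dif_neg hx
            rw [toCompl]
            simp only [this]
            rw [Fin.castPred_castSucc] }
      rw [Nat.card_congr E]
      show NgT _ k = Ng (m - S.card) k
      have hms : Fintype.card {x // x ∈ Sᶜ} = m - S.card := by
        rw [Fintype.card_coe, Finset.card_compl, Fintype.card_fin]
      rw [NgT_congr (Fintype.equivFinOfCardEq hms) k]
      rfl
    · rw [if_neg hS]
      have : IsEmpty {g : T // Φ g = S} := by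
        constructor
        rintro ⟨⟨g, hg⟩, hfg⟩
        exact hS (hfg ▸ hg (Fin.last k))
      exact Nat.card_of_isEmpty
  have hm : (Finset.univ : Finset (Fin m)).card = m := by simp
  calc Ng m (k+1) = Nat.card T := rfl
    _ = Nat.card (Σ S : Finset (Fin m), {g : T // Φ g = S}) :=
        Nat.card_congr (Equiv.sigmaFiberEquiv Φ).symm
    _ = ∑ S : Finset (Fin m), Nat.card {g : T // Φ g = S} := by
        rw [Nat.card_eq_fintype_card, Fintype.card_sigma]
        exact Finset.sum_congr rfl fun S _ => (Nat.card_eq_fintype_card).symm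
    _ = ∑ S : Finset (Fin m), (if 2 ≤ S.card then Ng (m - S.card) k else 0) :=
        Finset.sum_congr rfl fun S _ => key S
    _ = ∑ S ∈ (Finset.univ : Finset (Fin m)).powerset,
          (fun l => if 2 ≤ l then Ng (m - l) k else 0) S.card := by
        rw [Finset.powerset_univ]
    _ = ∑ l ∈ Finset.range ((Finset.univ : Finset (Fin m)).card + 1),
          (Finset.univ : Finset (Fin m)).card.choose l •
            (if 2 ≤ l then Ng (m - l) k else 0) :=
        Finset.sum_powerset_apply_card (fun l => if 2 ≤ l then Ng (m - l) k else 0)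
    _ = ∑ l ∈ Finset.range (m + 1), if 2 ≤ l then m.choose l * Ng (m - l) k else 0 := by
        rw [hm]
        refine Finset.sum_congr rfl fun l _ => ?_
        rw [smul_eq_mul]
        split_ifs <;> simp

end Rec

lemma Ng_zero (m : ℕ) : Ng m 0 = if m = 0 then 1 else 0 := by
  rcases Nat.eq_zero_or_pos m with rfl | hm
  · rw [if_pos rfl, Ng, NgT]
    haveI : Unique {g : Fin 0 → Fin 0 // Cond g} :=
      { default := ⟨fun x => x.elim0, fun y => y.elim0⟩
        uniq := fun g => Subtype.ext (funext fun x => x.elim0) }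
    exact Nat.card_unique
  · rw [if_neg (by omega), Ng, NgT]
    have : IsEmpty {g : Fin m → Fin 0 // Cond g} := by
      constructor
      rintro ⟨g, -⟩
      exact (g ⟨0, hm⟩).elim0
    exact Nat.card_of_isEmpty

lemma Ng_le (m k : ℕ) : Ng m k ≤ k ^ m := by
  classical
  rw [Ng, NgT]
  calc Nat.card {g : Fin m → Fin k // Cond g} ≤ Nat.card (Fin m → Fin k) := by
        rw [Nat.card_eq_fintype_card, Nat.card_eq_fintype_card]
        exact Fintype.card_subtype_le _
    _ = k ^ m := by
        rw [Nat.card_eq_fintype_card, Fintype.card_fun]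
        simp

lemma summable_ng_norm (k : ℕ) (x : ℝ) :
    Summable fun m : ℕ => ‖(Ng m k : ℝ) * x ^ m / m.factorial‖ := by
  refine Summable.of_nonneg_of_le (fun m => norm_nonneg _) (fun m => ?_)
    (Real.summable_pow_div_factorial ((k : ℝ) * |x|))
  have h1 : ‖(Ng m k : ℝ) * x ^ m / m.factorial‖
      = (Ng m k : ℝ) * |x| ^ m / m.factorial := by
    rw [norm_div, norm_mul, Real.norm_natCast, Real.norm_natCast, norm_pow, Real.norm_eq_abs]
  rw [h1, mul_pow]
  gcongr
  exact_mod_cast Ng_le m k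

lemma summable_ng (k : ℕ) (x : ℝ) :
    Summable fun m : ℕ => (Ng m k : ℝ) * x ^ m / m.factorial :=
  (summable_ng_norm k x).of_norm

lemma summable_ite_norm (x : ℝ) :
    Summable fun l : ℕ => ‖(if 2 ≤ l then x ^ l / l.factorial else 0 : ℝ)‖ := by
  refine Summable.of_nonneg_of_le (fun m => norm_nonneg _) (fun m => ?_)
    (Real.summable_pow_div_factorial |x|)
  split_ifs with h
  · rw [norm_div, norm_pow, Real.norm_eq_abs, Real.norm_natCast]
  · simp [abs_pow]
    positivity

lemma exp_sub_eq (x : ℝ) :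
    Real.exp x - 1 - x = ∑' l : ℕ, (if 2 ≤ l then x ^ l / l.factorial else 0) := by
  have hs : Summable fun l : ℕ => x ^ l / (l.factorial : ℝ) :=
    Real.summable_pow_div_factorial x
  have hexp : Real.exp x = ∑' l : ℕ, x ^ l / l.factorial := by
    rw [Real.exp_eq_exp_ℝ, NormedSpace.exp_eq_tsum_div]
  have hs2 : Summable fun l : ℕ => (if 2 ≤ l then x ^ l / l.factorial else 0 : ℝ) :=
    (summable_ite_norm x).of_norm
  have h1 := Summable.sum_add_tsum_nat_add 2 hs
  have h2 := Summable.sum_add_tsum_nat_add 2 hs2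
  have hshift : (fun l : ℕ => (if 2 ≤ l + 2 then x ^ (l+2) / (l+2).factorial else 0 : ℝ))
      = fun l : ℕ => x ^ (l+2) / (l+2).factorial := by
    funext l
    rw [if_pos (by omega)]
  rw [hshift] at h2
  have e1 : ∑ l ∈ Finset.range 2, x ^ l / (l.factorial : ℝ) = 1 + x := by
    simp [Finset.sum_range_succ]
  have e2 : ∑ l ∈ Finset.range 2, (if 2 ≤ l then x ^ l / l.factorial else 0 : ℝ) = 0 := by
    simp [Finset.sum_range_succ]
  rw [hexp, ← h1, ← h2, e1, e2]
  ring

theorem egf (k : ℕ) (x : ℝ) :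
    ∑' m : ℕ, (Ng m k : ℝ) * x ^ m / m.factorial = (Real.exp x - 1 - x) ^ k := by
  induction k with
  | zero =>
    rw [pow_zero,
      show (fun m : ℕ => (Ng m 0 : ℝ) * x ^ m / m.factorial)
        = fun m : ℕ => if m = 0 then (1:ℝ) else 0 by
          funext m
          rw [Ng_zero]
          split_ifs with h <;> simp [h]]
    exact tsum_ite_eq 0 1
  | succ k ih =>
    rw [pow_succ, ← ih, exp_sub_eq x,
      tsum_mul_tsum_eq_tsum_sum_antidiagonal_of_summable_norm (summable_ng_norm k x)
        (summable_ite_norm x)]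
    refine tsum_congr fun n => ?_
    rw [Finset.Nat.sum_antidiagonal_eq_sum_range_succ_mk, ← Finset.sum_range_reflect,
      Ng_succ n k, Nat.cast_sum, Finset.sum_mul, Finset.sum_div]
    refine Finset.sum_congr rfl fun i hi => ?_
    have hin : i ≤ n := by
      have := Finset.mem_range.mp hi; omega
    simp only [Nat.add_sub_cancel, show n + 1 - 1 - i = n - i from by omega,
      show n - (n - i) = i from by omega]
    by_cases h2 : 2 ≤ i
    · rw [if_pos h2, if_pos h2]
      have hchoose : (n.choose i : ℝ)
          = (n.factorial : ℝ) / ((i.factorial : ℝ) * ((n-i).factorial : ℝ)) :=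
        Nat.cast_choose ℝ hin
      have hx : x ^ n = x ^ (n - i) * x ^ i := by
        rw [← pow_add]
        congr 1
        omega
      push_cast
      rw [hchoose, hx]
      have h1 : (i.factorial : ℝ) ≠ 0 := Nat.cast_ne_zero.mpr i.factorial_ne_zero
      have h2' : ((n-i).factorial : ℝ) ≠ 0 := Nat.cast_ne_zero.mpr (n-i).factorial_ne_zero
      have h3 : (n.factorial : ℝ) ≠ 0 := Nat.cast_ne_zero.mpr n.factorial_ne_zero
      field_simp
    · rw [if_neg h2, if_neg h2]
      simp

lemma integral_pow_exp (N : ℕ) {c : ℝ} (hc : 0 < c) :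
    ∫ x in Set.Ioi (0:ℝ), x ^ N * Real.exp (-(x * c)) = N.factorial / c ^ (N + 1) := by
  have h := Real.integral_rpow_mul_exp_neg_mul_Ioi (a := (N:ℝ)+1) (r := c) (by positivity) hc
  rw [add_sub_cancel_right] at h
  have h2 : ∀ t ∈ Set.Ioi (0:ℝ),
      t ^ ((N:ℝ)) * Real.exp (-(c * t)) = t ^ N * Real.exp (-(t * c)) := by
    intro t _
    rw [Real.rpow_natCast, mul_comm c t]
  rw [setIntegral_congr_fun measurableSet_Ioi h2] at h
  rw [h, Real.Gamma_nat_eq_factorial,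
    show ((N:ℝ)+1) = ((N+1 : ℕ):ℝ) by push_cast; ring, Real.rpow_natCast]
  rw [one_div, inv_pow]
  ring

lemma integrable_pow_exp (N : ℕ) {c : ℝ} (hc : 0 < c) :
    IntegrableOn (fun x => x ^ N * Real.exp (-(x * c))) (Set.Ioi (0:ℝ)) := by
  have h := integrableOn_rpow_mul_exp_neg_mul_rpow (p := 1) (s := (N:ℝ)) (b := c)
    (lt_of_lt_of_le (by norm_num) (Nat.cast_nonneg N)) one_pos hc
  refine h.congr_fun (fun x hx => ?_) measurableSet_Ioi
  beta_reduce
  rw [Real.rpow_natCast, Real.rpow_one, neg_mul, mul_comm c x]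

lemma natid (d p k m : ℕ) (hdk : d = k + (p+1)) :
    (p+1) * d.choose (p+1) * k.factorial * (m+p).factorial
      = d.factorial * ((m+p).choose p) * m.factorial := by
  have h1 : d.choose (p+1) * (p+1).factorial * k.factorial = d.factorial := by
    have h := Nat.choose_mul_factorial_mul_factorial (show p+1 ≤ d by omega)
    rwa [show d - (p+1) = k from by omega] at h
  have h2 : (m+p).choose p * p.factorial * m.factorial = (m+p).factorial := by
    have h := Nat.choose_mul_factorial_mul_factorial (show p ≤ m+p by omega)
    rwa [show m + p - p = m from by omega] at h
  calc (p+1) * d.choose (p+1) * k.factorial * (m+p).factorial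
      = (p+1) * d.choose (p+1) * k.factorial * ((m+p).choose p * p.factorial * m.factorial) := by
        rw [h2]
    _ = (d.choose (p+1) * ((p+1) * p.factorial) * k.factorial) * ((m+p).choose p) * m.factorial := by
        ring
    _ = d.factorial * ((m+p).choose p) * m.factorial := by
        rw [← Nat.factorial_succ, h1]


end CouponAux

open CouponAux

/-- The probability that a completed coupon collection sequence over `d` kinds ends with
exactly `j` singletons:
`F(j) = Σ_n f(n,j) = j C(d,j) ∫_0^∞ x^{j-1}(e^x - 1 - x)^{d-j} e^{-xd} dx`. -/
theorem singletons_distribution (d j : ℕ) (hd : 1 ≤ d) (hj : 1 ≤ j) (hjd : j ≤ d) :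
    ∑' n : ℕ, f (n + 1) j d
      = (j : ℝ) * (Nat.choose d j : ℝ) *
          ∫ x in Set.Ioi (0 : ℝ),
            x ^ (j - 1) * (Real.exp x - 1 - x) ^ (d - j) * Real.exp (-(x * d)) := by
  classical
  obtain ⟨p, rfl⟩ : ∃ p, j = p + 1 := ⟨j - 1, by omega⟩
  set k := d - (p + 1) with hk
  have hdk : d = k + (p + 1) := by omega
  have hd0 : (0:ℝ) < d := by
    have : 0 < d := by omega
    exact_mod_cast this
  have hdne : (d:ℝ) ≠ 0 := ne_of_gt hd0
  have hr1 : ‖(k:ℝ)/(d:ℝ)‖ < 1 := by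
    rw [Real.norm_eq_abs, abs_of_nonneg (by positivity), div_lt_one hd0]
    exact_mod_cast (show k < d by omega)
  have hmaster : Summable (fun m : ℕ => ((m+p).choose p : ℝ) * ((k:ℝ)/(d:ℝ))^m) :=
    summable_choose_mul_geometric_of_norm_lt_one p hr1
  have hSge_le : ∀ m : ℕ, (Sge 2 m k : ℝ) ≤ (k:ℝ)^m := by
    intro m
    have h1 : Sge 2 m k ≤ k ^ m :=
      le_trans (Nat.le_mul_of_pos_left _ k.factorial_pos)
        (le_trans (le_of_eq (Ng_eq_fact m k).symm) (Ng_le m k))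
    exact_mod_cast h1
  set t : ℕ → ℝ := fun m =>
    (d.factorial : ℝ) * ((m+p).choose p : ℝ) * (Sge 2 m k : ℝ) / (d:ℝ)^(m+p+1) with ht
  have htnn : ∀ m, 0 ≤ t m := fun m => by rw [ht]; positivity
  have htle : ∀ m, t m ≤ ((d.factorial : ℝ) / (d:ℝ)^(p+1)) *
      (((m+p).choose p : ℝ) * ((k:ℝ)/(d:ℝ))^m) := by
    intro m
    have hrw : ((d.factorial : ℝ) / (d:ℝ)^(p+1)) *
        (((m+p).choose p : ℝ) * ((k:ℝ)/(d:ℝ))^m)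
        = (d.factorial : ℝ) * ((m+p).choose p : ℝ) * (k:ℝ)^m / (d:ℝ)^(m+p+1) := by
      rw [div_pow, pow_add, pow_add]
      field_simp
      ring
    rw [hrw]
    simp only [ht]
    gcongr
    exact hSge_le m
  have hts : Summable t := Summable.of_nonneg_of_le htnn htle (hmaster.mul_left _)
  -- LHS
  have hLterm : ∀ m : ℕ, f (m + p + 1) (p+1) d = t m := by
    intro m
    rw [f, show m + p + 1 - 1 = m + p from by omega, show p + 1 - 1 = p from by omega,
      show m + p + 1 - (p + 1) = m from by omega, ← hk, ht]
    ring
  have hF0 : ∀ n < p, f (n + 1) (p+1) d = 0 := by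
    intro n hn
    rw [f, show n + 1 - 1 = n from by omega, show p + 1 - 1 = p from by omega,
      Nat.choose_eq_zero_of_lt hn]
    simp
  have hFs : Summable (fun n => f (n + 1) (p+1) d) := by
    rw [← summable_nat_add_iff p]
    exact (funext (fun n => hLterm n) : (fun n => f (n + p + 1) (p+1) d) = t) ▸ hts
  have hL : (∑' n : ℕ, f (n + 1) (p+1) d) = ∑' m, t m := by
    rw [← Summable.sum_add_tsum_nat_add p hFs,
      Finset.sum_eq_zero (fun n hn => hF0 n (Finset.mem_range.mp hn)), zero_add]
    exact tsum_congr fun m => hLterm m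
  -- RHS
  set G : ℕ → ℝ → ℝ := fun m x =>
    (Ng m k : ℝ) / m.factorial * (x ^ (m + p) * Real.exp (-(x * d))) with hG
  have hInt : ∀ m, Integrable (G m) (volume.restrict (Set.Ioi (0:ℝ))) := fun m =>
    (integrable_pow_exp (m+p) hd0).const_mul _
  have hIval : ∀ m, (∫ x in Set.Ioi (0:ℝ), G m x)
      = (Ng m k : ℝ) / m.factorial * (((m+p).factorial : ℝ) / (d:ℝ)^(m+p+1)) := by
    intro m
    simp only [hG]
    rw [MeasureTheory.integral_const_mul, integral_pow_exp (m+p) hd0]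
  have hnormval : ∀ m : ℕ, (∫ x in Set.Ioi (0:ℝ), ‖G m x‖)
      = (Ng m k : ℝ) / m.factorial * (((m+p).factorial : ℝ) / (d:ℝ)^(m+p+1)) := by
    intro m
    rw [← hIval m]
    refine setIntegral_congr_fun measurableSet_Ioi (fun x hx => ?_)
    have hx0 : (0:ℝ) < x := hx
    rw [Real.norm_eq_abs, abs_of_nonneg]
    rw [hG]
    positivity
  have hterm : ∀ m : ℕ, ((p+1 : ℕ) : ℝ) * (d.choose (p+1) : ℝ) *
      (∫ x in Set.Ioi (0:ℝ), G m x) = t m := by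
    intro m
    have hid : (((p+1) * d.choose (p+1) * k.factorial * (m+p).factorial : ℕ) : ℝ)
        = ((d.factorial * ((m+p).choose p) * m.factorial : ℕ) : ℝ) := by
      exact_mod_cast congrArg (Nat.cast (R := ℝ)) (natid d p k m hdk)
    push_cast at hid
    rw [hIval m, Ng_eq_fact m k, ht]
    have hm : (m.factorial : ℝ) ≠ 0 := Nat.cast_ne_zero.mpr m.factorial_ne_zero
    have hdp : ((d:ℝ))^(m+p+1) ≠ 0 := pow_ne_zero _ hdne
    push_cast
    field_simp
    linear_combination (Sge 2 m k : ℝ) * hid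
  have hsumnorm : Summable (fun m => ∫ x in Set.Ioi (0:ℝ), ‖G m x‖) := by
    have hpos : (0:ℝ) < ((p+1:ℕ) : ℝ) * (d.choose (p+1) : ℝ) := by
      have hcp : 0 < d.choose (p+1) := Nat.choose_pos (by omega)
      positivity
    refine ((hts.mul_left (((p+1:ℕ) : ℝ) * (d.choose (p+1) : ℝ))⁻¹).congr fun m => ?_)
    rw [hnormval m, ← hIval m, ← hterm m]
    rw [inv_mul_cancel_left₀ (ne_of_gt hpos)]
  have hptwise : ∀ x : ℝ, x ^ p * (Real.exp x - 1 - x) ^ k * Real.exp (-(x * d))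
      = ∑' m, G m x := by
    intro x
    rw [← egf k x, mul_assoc, ← tsum_mul_right, ← tsum_mul_left]
    refine tsum_congr fun m => ?_
    simp only [hG]
    rw [pow_add]
    ring
  have hR : (∫ x in Set.Ioi (0:ℝ),
        x ^ p * (Real.exp x - 1 - x) ^ k * Real.exp (-(x * d)))
      = ∑' m, ∫ x in Set.Ioi (0:ℝ), G m x := by
    rw [show (fun x => x ^ p * (Real.exp x - 1 - x) ^ k * Real.exp (-(x * d)))
      = fun x => ∑' m, G m x from funext hptwise]
    exact (integral_tsum_of_summable_integral_norm hInt hsumnorm).symm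
  rw [hL]
  simp only [Nat.add_sub_cancel]
  rw [hR, ← tsum_mul_left]
  exact tsum_congr fun m => (hterm m).symm
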